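/- Let Z be standard normal, let B ≥ 0, let b ∈ ℝ with |b| ≤ B, and let T = Z + b. Let cv_{1−α}(B) denote the 1−α quantile of |Z + B|. Then P(|T| ≤ cv_{1−α}(B)) ≥ 1 − α. -/

import Mathlib

open MeasureTheory ProbabilityTheory Real

lemma gpdf_comp_le {c x : ℝ} (hc : 0 ≤ c) (hx : x ≤ c) :
    gaussianPDFReal 0 1 (x - 2 * c) ≤ gaussianPDFReal 0 1 x := by
  unfold gaussianPDFReal
  apply mul_le_mul_of_nonneg_left _ (by positivity)
  apply Real.exp_le_exp.2
  have : x ^ 2 ≤ (x - 2 * c) ^ 2 := by nlinarith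
  push_cast
  nlinarith

lemma gpdf_shift (d : ℝ) : (fun x => gaussianPDFReal 0 1 (x - d)) = gaussianPDFReal d 1 := by
  funext x
  simp [gaussianPDFReal, sub_zero]

lemma gpdf_intervalIntegrable (μ : ℝ) (a b : ℝ) :
    IntervalIntegrable (gaussianPDFReal μ 1) volume a b :=
  (integrable_gaussianPDFReal μ 1).intervalIntegrable

/-- Interval of length `2c` centered closer to 0 has larger Gaussian mass. -/
lemma F_mono {c b B : ℝ} (hc : 0 ≤ c) (hb : 0 ≤ b) (hbB : b ≤ B) :
    ∫ x in (-c - B)..(c - B), gaussianPDFReal 0 1 x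
      ≤ ∫ x in (-c - b)..(c - b), gaussianPDFReal 0 1 x := by
  have hint : ∀ a b' : ℝ, IntervalIntegrable (gaussianPDFReal 0 1) volume a b' :=
    fun a b' => gpdf_intervalIntegrable 0 a b'
  have h1 : (∫ x in (-c - B)..(-c - b), gaussianPDFReal 0 1 x)
      + ∫ x in (-c - b)..(c - b), gaussianPDFReal 0 1 x
      = ∫ x in (-c - B)..(c - b), gaussianPDFReal 0 1 x :=
    intervalIntegral.integral_add_adjacent_intervals (hint _ _) (hint _ _)
  have h2 : (∫ x in (-c - B)..(c - B), gaussianPDFReal 0 1 x)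
      + ∫ x in (c - B)..(c - b), gaussianPDFReal 0 1 x
      = ∫ x in (-c - B)..(c - b), gaussianPDFReal 0 1 x :=
    intervalIntegral.integral_add_adjacent_intervals (hint _ _) (hint _ _)
  have key : (∫ x in (-c - B)..(-c - b), gaussianPDFReal 0 1 x)
      ≤ ∫ x in (c - B)..(c - b), gaussianPDFReal 0 1 x := by
    have hsub : (∫ x in (c - B)..(c - b), gaussianPDFReal 0 1 (x - 2 * c))
        = ∫ x in (-c - B)..(-c - b), gaussianPDFReal 0 1 x := by
      rw [intervalIntegral.integral_comp_sub_right (gaussianPDFReal 0 1) (2 * c)]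
      ring_nf
    rw [← hsub]
    apply intervalIntegral.integral_mono_on (by linarith)
    · have := gpdf_intervalIntegrable (2 * c) (c - B) (c - b)
      rwa [← gpdf_shift (2 * c)] at this
    · exact hint _ _
    · intro x hx
      exact gpdf_comp_le hc (by rcases hx with ⟨_, h2'⟩; linarith)
  linarith

/-- Symmetry: the Gaussian mass of `{|z + m| ≤ c}` depends only on `|m|`. -/
lemma F_neg (c m : ℝ) :
    (∫ x in (-c - m)..(c - m), gaussianPDFReal 0 1 x)
      = ∫ x in (-c - (-m))..(c - (-m)), gaussianPDFReal 0 1 x := by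
  have heven : ∀ x : ℝ, gaussianPDFReal 0 1 (-x) = gaussianPDFReal 0 1 x := by
    intro x; simp [gaussianPDFReal]
  have h := intervalIntegral.integral_comp_neg (a := m - c) (b := c + m)
    (f := gaussianPDFReal 0 1)
  simp only [heven] at h
  rw [show -c - (-m) = m - c from by ring, show c - (-m) = c + m from by ring, h,
    show -(c + m) = -c - m from by ring, show -(m - c) = c - m from by ring]

lemma set_eq_Icc (m c : ℝ) : {z : ℝ | |z + m| ≤ c} = Set.Icc (-c - m) (c - m) := by
  ext z
  simp only [Set.mem_setOf_eq, Set.mem_Icc, abs_le]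
  constructor <;> rintro ⟨h1, h2⟩ <;> constructor <;> linarith

lemma gauss_Icc (m c : ℝ) (hc : 0 ≤ c) :
    gaussianReal 0 1 {z : ℝ | |z + m| ≤ c}
      = ENNReal.ofReal (∫ x in (-c - m)..(c - m), gaussianPDFReal 0 1 x) := by
  rw [set_eq_Icc, gaussianReal_apply_eq_integral 0 one_ne_zero,
    intervalIntegral.integral_of_le (by linarith), integral_Icc_eq_integral_Ioc]

/-- Anticoncentration comparison. -/
lemma gauss_compare {c b B : ℝ} (hc : 0 ≤ c) (hb : |b| ≤ B) :
    gaussianReal 0 1 {z : ℝ | |z + B| ≤ c} ≤ gaussianReal 0 1 {z : ℝ | |z + b| ≤ c} := by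
  have hB : 0 ≤ B := le_trans (abs_nonneg b) hb
  rw [gauss_Icc B c hc, gauss_Icc b c hc]
  apply ENNReal.ofReal_le_ofReal
  have habs : (∫ x in (-c - b)..(c - b), gaussianPDFReal 0 1 x)
      = ∫ x in (-c - |b|)..(c - |b|), gaussianPDFReal 0 1 x := by
    rcases abs_cases b with ⟨h1, _⟩ | ⟨h1, _⟩
    · rw [h1]
    · rw [h1]; exact F_neg c b
  rw [habs]
  exact F_mono hc (abs_nonneg b) hb

/-- Coverage guarantee for bias-aware inference: if `T = Z + b` with `Z` standard
normal and `|b| ≤ B`, then `P(|T| ≤ cv_{1−α}(B)) ≥ 1 − α`, where `cv_{1−α}(B)` is the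
`1−α` quantile of `|Z + B|`. -/
theorem bias_aware_coverage
    (α : ℝ) (hα : α ∈ Set.Ioo (0 : ℝ) 1)
    (B b : ℝ) (hB : 0 ≤ B) (hb : |b| ≤ B)
    (cv : ℝ)
    (hcv : cv = sInf {t : ℝ |
      ENNReal.ofReal (1 - α) ≤ gaussianReal 0 1 {z : ℝ | |z + B| ≤ t}}) :
    ENNReal.ofReal (1 - α) ≤ gaussianReal 0 1 {z : ℝ | |z + b| ≤ cv} := by
  obtain ⟨hα0, hα1⟩ := hα
  set S : Set ℝ := {t : ℝ |
      ENNReal.ofReal (1 - α) ≤ gaussianReal 0 1 {z : ℝ | |z + B| ≤ t}} with hS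
  -- S is nonempty
  have hne : S.Nonempty := by
    have hmono : Monotone (fun n : ℕ => {z : ℝ | |z + B| ≤ (n : ℝ)}) := by
      intro n m hnm z hz
      simp only [Set.mem_setOf_eq] at hz ⊢
      exact hz.trans (Nat.cast_le.2 hnm)
    have hunion : (⋃ n : ℕ, {z : ℝ | |z + B| ≤ (n : ℝ)}) = Set.univ := by
      ext z
      simp only [Set.mem_iUnion, Set.mem_setOf_eq, Set.mem_univ, iff_true]
      exact exists_nat_ge _
    have hsup : (⨆ n : ℕ, gaussianReal 0 1 {z : ℝ | |z + B| ≤ (n : ℝ)}) = 1 := by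
      rw [← Monotone.measure_iUnion hmono, hunion, measure_univ]
    have hlt : ENNReal.ofReal (1 - α) < 1 := by
      rw [ENNReal.ofReal_lt_one]; linarith
    rw [← hsup] at hlt
    obtain ⟨n, hn⟩ := lt_iSup_iff.mp hlt
    exact ⟨(n : ℝ), le_of_lt hn⟩
  -- S is bounded below by 0
  have hbdd : ∀ t ∈ S, 0 ≤ t := by
    intro t ht
    by_contra hneg
    push_neg at hneg
    have hempty : {z : ℝ | |z + B| ≤ t} = ∅ := by
      ext z
      simp only [Set.mem_setOf_eq, Set.mem_empty_iff_false, iff_false, not_le]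
      exact lt_of_lt_of_le hneg (abs_nonneg _)
    rw [hS] at ht
    simp only [Set.mem_setOf_eq, hempty, measure_empty, nonpos_iff_eq_zero] at ht
    rw [ENNReal.ofReal_eq_zero] at ht
    linarith
  have hbddBelow : BddBelow S := ⟨0, fun t ht => hbdd t ht⟩
  have hcv0 : 0 ≤ cv := by
    rw [hcv]; exact le_csInf hne hbdd
  -- monotonicity of t ↦ {z | |z+B| ≤ t}
  have hsetmono : ∀ {s t : ℝ}, s ≤ t →
      {z : ℝ | |z + B| ≤ s} ⊆ {z : ℝ | |z + B| ≤ t} :=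
    fun hst z hz => le_trans hz hst
  -- attainment at cv: μ {|z+B| ≤ cv} ≥ 1 - α
  have hattain : ENNReal.ofReal (1 - α) ≤ gaussianReal 0 1 {z : ℝ | |z + B| ≤ cv} := by
    set A : ℕ → Set ℝ := fun n => {z : ℝ | |z + B| ≤ cv + 1 / (n + 1)} with hA
    have hAm : ∀ n, NullMeasurableSet (A n) (gaussianReal 0 1) := by
      intro n
      rw [hA]
      simp only [set_eq_Icc]
      exact measurableSet_Icc.nullMeasurableSet
    have hAanti : Antitone A := by
      intro n m hnm
      apply hsetmono
      have : (1 : ℝ) / (m + 1) ≤ 1 / (n + 1) := by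
        apply one_div_le_one_div_of_le (by positivity)
        exact_mod_cast Nat.add_le_add_right hnm 1
      linarith
    have hAdir : Directed (· ⊇ ·) A := hAanti.directed_ge
    have hiInter : (⋂ n, A n) = {z : ℝ | |z + B| ≤ cv} := by
      ext z
      simp only [Set.mem_iInter, hA, Set.mem_setOf_eq]
      constructor
      · intro h
        by_contra hgt
        push_neg at hgt
        obtain ⟨n, hn⟩ := exists_nat_one_div_lt (sub_pos.mpr hgt)
        exact absurd (h n) (by push_cast; push_cast at hn; linarith)
      · intro h n
        have : (0:ℝ) < 1 / (n + 1) := by positivity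
        linarith
    have heach : ∀ n, ENNReal.ofReal (1 - α) ≤ gaussianReal 0 1 (A n) := by
      intro n
      have hlt : sInf S < cv + 1 / (n + 1) := by
        rw [← hcv]
        have hp : (0:ℝ) < 1 / ((n:ℝ) + 1) := by positivity
        linarith
      obtain ⟨t, htS, htlt⟩ := exists_lt_of_csInf_lt hne hlt
      exact le_trans htS (measure_mono (hsetmono (le_of_lt htlt)))
    have := Directed.measure_iInter hAm hAdir ⟨0, measure_ne_top _ _⟩
    rw [hiInter] at this
    rw [this]
    exact le_iInf heach
  exact le_trans hattain (gauss_compare hcv0 hb)
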